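/- Let q = 3^d with d even, and let b, b' ∈ F_q. The curves E_b: y^2 = x^3 - x + b and E_{b'}: y^2 = x^3 - x + b' are isomorphic over F_q if and only if Tr(b) = ±Tr(b'), where Tr is the trace to F_3; equivalently, iff Tr(b) = 0 ⟺ Tr(b') = 0. -/

import Mathlib

/-- The Weierstrass curve `y² = x³ - x + b`. -/
def Eb (F : Type) [Field F] (b : F) : WeierstrassCurve F :=
  { a₁ := 0, a₂ := 0, a₃ := 0, a₄ := -1, a₆ := b }

section Aux

variable (F : Type) [Field F] [Fintype F] [Algebra (ZMod 3) F]

private lemma fact_prime_three : Fact (Nat.Prime 3) := ⟨by norm_num⟩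

omit [Fintype F] in
private lemma auxCharP : CharP F 3 := by
  haveI := fact_prime_three
  exact charP_of_injective_algebraMap (algebraMap (ZMod 3) F).injective 3

private lemma trace_pow_three (x : F) :
    Algebra.trace (ZMod 3) F (x ^ 3) = Algebra.trace (ZMod 3) F x := by
  haveI := fact_prime_three
  haveI := auxCharP F
  haveI : ExpChar F 3 := .prime (by norm_num)
  let e : F ≃ₐ[ZMod 3] F :=
    { frobeniusEquiv F 3 with
      commutes' := fun c => by
        show frobenius F 3 (algebraMap (ZMod 3) F c) = algebraMap (ZMod 3) F c
        rw [frobenius_def, ← map_pow, ZMod.pow_card c] }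
  have h := Algebra.trace_eq_of_algEquiv e x
  have hex : e x = x ^ 3 := rfl
  rwa [hex] at h

private lemma exists_AS (c : F) (hc : Algebra.trace (ZMod 3) F c = 0) :
    ∃ r : F, r ^ 3 - r = c := by
  haveI := fact_prime_three
  haveI := auxCharP F
  haveI : ExpChar F 3 := .prime (by norm_num)
  haveI : FiniteDimensional (ZMod 3) F := Module.Finite.of_finite
  classical
  let φ : F →ₗ[ZMod 3] F :=
    { toFun := fun x => x ^ 3 - x
      map_add' := fun x y => by
        show (x + y) ^ 3 - (x + y) = (x ^ 3 - x) + (y ^ 3 - y)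
        rw [add_pow_char]
        ring
      map_smul' := fun m x => by
        have hm : (algebraMap (ZMod 3) F m) ^ 3 = algebraMap (ZMod 3) F m := by
          rw [← map_pow, ZMod.pow_card]
        simp only [Algebra.smul_def, RingHom.id_apply, mul_pow, hm, mul_sub] }
  let T : F →ₗ[ZMod 3] ZMod 3 := Algebra.trace (ZMod 3) F
  have hle : LinearMap.range φ ≤ LinearMap.ker T := by
    rintro _ ⟨r, rfl⟩
    have hφ : φ r = r ^ 3 - r := rfl
    rw [LinearMap.mem_ker, hφ]
    show Algebra.trace (ZMod 3) F (r ^ 3 - r) = 0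
    rw [map_sub, trace_pow_three, sub_self]
  have hkerφ : LinearMap.ker φ = LinearMap.range (Algebra.linearMap (ZMod 3) F) := by
    ext x
    rw [LinearMap.mem_ker, LinearMap.mem_range]
    constructor
    · intro hx
      have hx' : x ^ 3 - x = 0 := hx
      have hfac : x * (x - 1) * (x + 1) = 0 := by linear_combination hx'
      rcases mul_eq_zero.mp hfac with h | h
      · rcases mul_eq_zero.mp h with h | h
        · exact ⟨0, by simp [h.symm]⟩
        · exact ⟨1, by simpa using (sub_eq_zero.mp h).symm⟩
      · refine ⟨-1, ?_⟩
        have hx1 := eq_neg_of_add_eq_zero_left h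
        simp [hx1]
    · rintro ⟨m, rfl⟩
      show (algebraMap (ZMod 3) F m) ^ 3 - algebraMap (ZMod 3) F m = 0
      rw [← map_pow, ZMod.pow_card, sub_self]
  have hrankker : Module.finrank (ZMod 3) (LinearMap.ker φ) = 1 := by
    rw [hkerφ, LinearMap.finrank_range_of_inj (f := Algebra.linearMap (ZMod 3) F)
      (algebraMap (ZMod 3) F).injective, Module.finrank_self]
  have hTsurj : Function.Surjective T := Algebra.trace_surjective (ZMod 3) F
  have hrangeT : Module.finrank (ZMod 3) (LinearMap.range T) = 1 := by
    rw [LinearMap.range_eq_top.mpr hTsurj, finrank_top, Module.finrank_self]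
  have h1 := LinearMap.finrank_range_add_finrank_ker φ
  have h2 := LinearMap.finrank_range_add_finrank_ker T
  have heq : LinearMap.range φ = LinearMap.ker T := by
    apply Submodule.eq_of_le_of_finrank_le hle
    omega
  have hcmem : c ∈ LinearMap.ker T := hc
  rw [← heq] at hcmem
  obtain ⟨r, hr⟩ := hcmem
  exact ⟨r, hr⟩

private lemma exists_i (d : ℕ) (hd : Even d) (hF : Fintype.card F = 3 ^ d) :
    ∃ i : F, i ^ 2 = -1 := by
  haveI := fact_prime_three
  haveI := auxCharP F
  have hchar : ringChar F = 3 := ringChar.eq F 3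
  have hchar2 : ringChar F ≠ 2 := by rw [hchar]; norm_num
  have hne : (-1 : F) ≠ 0 := by
    intro h
    exact one_ne_zero (α := F) (by simpa using congrArg Neg.neg h)
  obtain ⟨m, hm⟩ := hd
  have hmod : 3 ^ d % 4 = 1 := by
    subst hm
    rw [show m + m = 2 * m by ring, pow_mul, Nat.pow_mod]
    norm_num
  have hk : 3 ^ d = 4 * (3 ^ d / 4) + 1 := by omega
  have hsq : IsSquare (-1 : F) := by
    rw [FiniteField.isSquare_iff hchar2 hne, hF]
    have hdiv : 3 ^ d / 2 = 2 * (3 ^ d / 4) := by omega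
    rw [hdiv, pow_mul]
    norm_num
  obtain ⟨i, hi⟩ := hsq
  exact ⟨i, by rw [sq]; exact hi.symm⟩

end Aux

private lemma zmod3_tauto : ∀ x y : ZMod 3, (x = y ∨ x = -y) ↔ (x = 0 ↔ y = 0) := by decide

theorem typeI_isomorphic_iff_trace_eq_even
    (d : ℕ) (hd : Even d) (F : Type) [Field F] [Fintype F] [Algebra (ZMod 3) F]
    (hF : Fintype.card F = 3 ^ d) (b b' : F) :
    ((∃ C : WeierstrassCurve.VariableChange F, C • Eb F b = Eb F b') ↔
      (Algebra.trace (ZMod 3) F b = Algebra.trace (ZMod 3) F b' ∨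
        Algebra.trace (ZMod 3) F b = -Algebra.trace (ZMod 3) F b')) ∧
    ((∃ C : WeierstrassCurve.VariableChange F, C • Eb F b = Eb F b') ↔
      (Algebra.trace (ZMod 3) F b = 0 ↔ Algebra.trace (ZMod 3) F b' = 0)) := by
  haveI := fact_prime_three
  haveI := auxCharP F
  have h3 : (3 : F) = 0 := by exact_mod_cast CharP.cast_eq_zero F 3
  have key : (∃ C : WeierstrassCurve.VariableChange F,
      C • Eb F b = Eb F b') ↔
      (Algebra.trace (ZMod 3) F b = Algebra.trace (ZMod 3) F b' ∨
        Algebra.trace (ZMod 3) F b = -Algebra.trace (ZMod 3) F b') := by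
    constructor
    · rintro ⟨C, hC⟩
      have h1 := congrArg WeierstrassCurve.a₁ hC
      have h3' := congrArg WeierstrassCurve.a₃ hC
      have h4 := congrArg WeierstrassCurve.a₄ hC
      have h6 := congrArg WeierstrassCurve.a₆ hC
      simp only [WeierstrassCurve.variableChange_a₁, WeierstrassCurve.variableChange_a₂, WeierstrassCurve.variableChange_a₃, WeierstrassCurve.variableChange_a₄, WeierstrassCurve.variableChange_a₆, Eb] at h1 h3' h4 h6
      set w : F := ((C.u⁻¹ : Fˣ) : F) with hw
      have hw0 : w ≠ 0 := Units.ne_zero C.u⁻¹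
      -- s = 0
      have h2 : (2 : F) = -1 := by linear_combination h3
      have hs : C.s = 0 := by
        rcases mul_eq_zero.mp h1 with h | h
        · exact absurd h hw0
        · rw [show (0 : F) + 2 * C.s = 2 * C.s by ring, h2] at h
          simpa using h
      have ht : C.t = 0 := by
        rcases mul_eq_zero.mp h3' with h | h
        · exact absurd (pow_eq_zero_iff (n := 3) (by norm_num) |>.mp h) hw0
        · rw [show (0 : F) + C.r * 0 + 2 * C.t = 2 * C.t by ring, h2] at h
          simpa using h
      rw [hs, ht] at h4
      rw [ht] at h6
      have hw4 : w ^ 4 = 1 := by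
        linear_combination -h4 + w ^ 4 * C.r ^ 2 * h3
      have h6' : w ^ 6 * (b + C.r ^ 3 - C.r) = b' := by
        rw [← h6]; ring
      have hw2 : w ^ 2 = 1 ∨ w ^ 2 = -1 :=
        mul_self_eq_one_iff.mp (show (w ^ 2) * (w ^ 2) = 1 by rw [← hw4]; ring)
      rcases hw2 with h | h
      · left
        have hw6 : w ^ 6 = 1 := by
          rw [show (6 : ℕ) = 2 * 3 by norm_num, pow_mul, h]; ring
        rw [hw6, one_mul] at h6'
        rw [← h6', show b + C.r ^ 3 - C.r = b + (C.r ^ 3 - C.r) by ring, map_add,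
          map_sub, trace_pow_three, sub_self, add_zero]
      · right
        have hw6 : w ^ 6 = -1 := by
          rw [show (6 : ℕ) = 2 * 3 by norm_num, pow_mul, h]; ring
        rw [hw6] at h6'
        rw [← h6', show (-1 : F) * (b + C.r ^ 3 - C.r) = -(b + (C.r ^ 3 - C.r)) by ring,
          map_neg, map_add, map_sub, trace_pow_three, sub_self, add_zero, neg_neg]
    · rintro (h | h)
      · obtain ⟨r, hr⟩ := exists_AS F (b' - b) (by rw [map_sub, ← h, sub_self])
        refine ⟨⟨1, r, 0, 0⟩, ?_⟩
        ext <;> simp only [WeierstrassCurve.variableChange_a₁, WeierstrassCurve.variableChange_a₂, WeierstrassCurve.variableChange_a₃, WeierstrassCurve.variableChange_a₄, WeierstrassCurve.variableChange_a₆, Eb, inv_one, Units.val_one]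
        · ring
        · linear_combination r * h3
        · ring
        · linear_combination r ^ 2 * h3
        · linear_combination hr
      · obtain ⟨i, hi⟩ := exists_i F d hd hF
        have hi0 : i ≠ 0 := fun h0 => by
          rw [h0] at hi
          exact one_ne_zero (α := F) (by simpa using congrArg Neg.neg hi.symm)
        obtain ⟨r, hr⟩ := exists_AS F (-b' - b)
          (by rw [map_sub, map_neg, h]; ring)
        refine ⟨⟨Units.mk0 i hi0, r, 0, 0⟩, ?_⟩
        have hival : (((Units.mk0 i hi0)⁻¹ : Fˣ) : F) = i⁻¹ := by
          rw [Units.val_inv_eq_inv_val]; rfl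
        have hiinv : i⁻¹ = -i := by
          refine inv_eq_of_mul_eq_one_right ?_
          rw [show i * -i = -(i ^ 2) by ring, hi]
          ring
        have hi4 : (i⁻¹) ^ 4 = 1 := by
          rw [hiinv, show (-i) ^ 4 = (i ^ 2) ^ 2 by ring, hi]; ring
        have hi6 : (i⁻¹) ^ 6 = -1 := by
          rw [hiinv, show (-i) ^ 6 = (i ^ 2) ^ 3 by ring, hi]; ring
        ext <;> simp only [WeierstrassCurve.variableChange_a₁, WeierstrassCurve.variableChange_a₂, WeierstrassCurve.variableChange_a₃, WeierstrassCurve.variableChange_a₄, WeierstrassCurve.variableChange_a₆, Eb, hival]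
        · ring
        · linear_combination i⁻¹ ^ 2 * r * h3
        · ring
        · linear_combination (-1 + 3 * r ^ 2) * hi4 + r ^ 2 * h3
        · linear_combination (b - r + r ^ 3) * hi6 - hr
  exact ⟨key, key.trans (zmod3_tauto _ _)⟩
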